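/- The category of pastures has equalizers: for any pastures P₁, P₂ and any morphisms of pastures f, g : P₁ → P₂, there exists a pasture Q together with a morphism of pastures q : Q → P₁ with f ∘ q = g ∘ q, such that for every pasture Q' with a morphism q' : Q' → P₁ satisfying f ∘ q' = g ∘ q' there is a unique morphism of pastures u : Q' → Q with q ∘ u = q'. -/
import Mathlib


universe u v w

/-- A pasture structure on a type `P`: a multiplication, a zero, a one,
an involution `neg`, and a ternary nullset relation `null a b c`
(meaning "`a + b + c = 0`"). -/
structure PastureStr (P : Type u) where
  mul : P → P → P
  zero : P
  one : P
  neg : P → P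
  null : P → P → P → Prop

/-- `P` together with a `PastureStr` is a pasture: `P` is a commutative
monoid with zero whose nonzero elements form an abelian group, `neg` is an
involution fixing `0`, and the nullset is invariant under permutations,
invariant under multiplication, and satisfies `a + b + 0 = 0 ↔ a = -b`. -/
structure PastureStr.IsPasture {P : Type u} (S : PastureStr P) : Prop where
  mul_comm : ∀ a b : P, S.mul a b = S.mul b a
  mul_assoc : ∀ a b c : P, S.mul (S.mul a b) c = S.mul a (S.mul b c)
  one_mul : ∀ a : P, S.mul S.one a = a
  zero_mul : ∀ a : P, S.mul S.zero a = S.zero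
  one_ne_zero : S.one ≠ S.zero
  mul_ne_zero : ∀ a b : P, a ≠ S.zero → b ≠ S.zero → S.mul a b ≠ S.zero
  exists_inv : ∀ a : P, a ≠ S.zero → ∃ b : P, S.mul a b = S.one
  neg_neg : ∀ a : P, S.neg (S.neg a) = a
  neg_zero : S.neg S.zero = S.zero
  null_swap_left : ∀ a b c : P, S.null a b c → S.null b a c
  null_swap_right : ∀ a b c : P, S.null a b c → S.null a c b
  null_mul : ∀ d a b c : P, S.null a b c → S.null (S.mul d a) (S.mul d b) (S.mul d c)
  null_zero : ∀ a b : P, S.null a b S.zero ↔ a = S.neg b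

/-- A morphism of pastures: a multiplicative map preserving `0`, `1`,
the involution and the nullset. -/
structure PastureStr.IsHom {P : Type u} {P' : Type v} (S : PastureStr P) (T : PastureStr P')
    (f : P → P') : Prop where
  map_mul : ∀ a b : P, f (S.mul a b) = T.mul (f a) (f b)
  map_zero : f S.zero = T.zero
  map_one : f S.one = T.one
  map_neg : ∀ a : P, f (S.neg a) = T.neg (f a)
  map_null : ∀ a b c : P, S.null a b c → T.null (f a) (f b) (f c)

/-- **The category of pastures has equalizers.**
For pastures `P₁, P₂` and morphisms `f, g : P₁ → P₂` there is a pasture `Q`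
with a morphism `q : Q → P₁` satisfying `f ∘ q = g ∘ q`, such that for every
pasture `Q'` with a morphism `q' : Q' → P₁` satisfying `f ∘ q' = g ∘ q'`
there is a unique morphism `u : Q' → Q` with `q ∘ u = q'`. -/
theorem pastures_have_equalizers
    {P₁ P₂ : Type u} (S₁ : PastureStr P₁) (S₂ : PastureStr P₂)
    (hS₁ : S₁.IsPasture) (hS₂ : S₂.IsPasture)
    (f g : P₁ → P₂) (hf : S₁.IsHom S₂ f) (hg : S₁.IsHom S₂ g) :
    ∃ (Q : Type u) (SQ : PastureStr Q), SQ.IsPasture ∧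
      ∃ q : Q → P₁, PastureStr.IsHom SQ S₁ q ∧ f ∘ q = g ∘ q ∧
        ∀ (Q' : Type v) (S' : PastureStr Q'), S'.IsPasture →
          ∀ q' : Q' → P₁, PastureStr.IsHom S' S₁ q' → f ∘ q' = g ∘ q' →
            ∃! u : Q' → Q, PastureStr.IsHom S' SQ u ∧ q ∘ u = q' := by
  refine ⟨{x : P₁ // f x = g x}, ?_⟩
  have hmul : ∀ a b : {x : P₁ // f x = g x}, f (S₁.mul a.1 b.1) = g (S₁.mul a.1 b.1) := by
    intro a b
    rw [hf.map_mul, hg.map_mul, a.2, b.2]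
  have hneg : ∀ a : {x : P₁ // f x = g x}, f (S₁.neg a.1) = g (S₁.neg a.1) := by
    intro a; rw [hf.map_neg, hg.map_neg, a.2]
  refine ⟨⟨fun a b => ⟨S₁.mul a.1 b.1, hmul a b⟩,
    ⟨S₁.zero, by rw [hf.map_zero, hg.map_zero]⟩,
    ⟨S₁.one, by rw [hf.map_one, hg.map_one]⟩,
    fun a => ⟨S₁.neg a.1, hneg a⟩,
    fun a b c => S₁.null a.1 b.1 c.1⟩, ?_, ?_⟩
  · constructor
    · intro a b; exact Subtype.ext (hS₁.mul_comm a.1 b.1)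
    · intro a b c; exact Subtype.ext (hS₁.mul_assoc a.1 b.1 c.1)
    · intro a; exact Subtype.ext (hS₁.one_mul a.1)
    · intro a; exact Subtype.ext (hS₁.zero_mul a.1)
    · intro h; exact hS₁.one_ne_zero (congrArg Subtype.val h)
    · intro a b ha hb h
      exact hS₁.mul_ne_zero a.1 b.1 (fun h' => ha (Subtype.ext h'))
        (fun h' => hb (Subtype.ext h')) (congrArg Subtype.val h)
    · intro a ha
      obtain ⟨b, hb⟩ := hS₁.exists_inv a.1 (fun h' => ha (Subtype.ext h'))
      have hfb : f b = g b := by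
        have h1 : S₂.mul (f a.1) (f b) = S₂.one := by rw [← hf.map_mul, hb, hf.map_one]
        have h2 : S₂.mul (f a.1) (g b) = S₂.one := by
          rw [a.2, ← hg.map_mul, hb, hg.map_one]
        calc f b = S₂.mul S₂.one (f b) := (hS₂.one_mul _).symm
          _ = S₂.mul (S₂.mul (f a.1) (g b)) (f b) := by rw [h2]
          _ = S₂.mul (g b) (S₂.mul (f a.1) (f b)) := by
              rw [hS₂.mul_comm (f a.1) (g b), hS₂.mul_assoc]
          _ = S₂.mul (g b) S₂.one := by rw [h1]
          _ = g b := by rw [hS₂.mul_comm, hS₂.one_mul]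
      exact ⟨⟨b, hfb⟩, Subtype.ext hb⟩
    · intro a; exact Subtype.ext (hS₁.neg_neg a.1)
    · exact Subtype.ext hS₁.neg_zero
    · intro a b c h; exact hS₁.null_swap_left a.1 b.1 c.1 h
    · intro a b c h; exact hS₁.null_swap_right a.1 b.1 c.1 h
    · intro d a b c h; exact hS₁.null_mul d.1 a.1 b.1 c.1 h
    · intro a b
      constructor
      · intro h; exact Subtype.ext ((hS₁.null_zero a.1 b.1).mp h)
      · intro h; exact (hS₁.null_zero a.1 b.1).mpr (congrArg Subtype.val h)
  · refine ⟨Subtype.val, ⟨fun a b => rfl, rfl, rfl, fun a => rfl, fun a b c h => h⟩,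
      funext fun a => a.2, ?_⟩
    intro Q' S' hS' q' hq' hfg
    refine ⟨fun x => ⟨q' x, congrFun hfg x⟩, ⟨?_, funext fun x => rfl⟩, ?_⟩
    · exact ⟨fun a b => Subtype.ext (hq'.map_mul a b), Subtype.ext hq'.map_zero,
        Subtype.ext hq'.map_one, fun a => Subtype.ext (hq'.map_neg a),
        fun a b c h => hq'.map_null a b c h⟩
    · intro u ⟨hu, hu2⟩
      funext x
      exact Subtype.ext (congrFun hu2 x)
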